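/- arXiv:0706.3734 — 2 statements merged into one kernel-verified Lean document; each statement's English description precedes it below -/
import Mathlib

section
/- Equation (s) of the paper: if r ≡ 1 (mod 4) then s(1) = ζ^{−2} · ∑_{a ∈ ZMod r, a ≠ 0} ζ^{3·(a²+a+1)⁻¹} − ζ^{−2} · ∑_{a ∈ ZMod r, a ≠ 0} ζ^{3·((2a+1)·(a²+a+1)⁻¹)²}, while if r ≡ 3 (mod 4) then s(1) equals the negative of this expression; exponents are computed in ZMod r (a² + a + 1 ≠ 0 for all a since r ≡ 2 (mod 3)). -/
open Complex Finset

/-- For `n ∈ ZMod r`, the complex number `ζ^n = exp(2πi·n̂/r)` where `n̂` is the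
canonical lift of `n`. -/
noncomputable def zmodExp (r : ℕ) (n : ZMod r) : ℂ :=
  Complex.exp (2 * Real.pi * Complex.I * (n.val : ℂ) / (r : ℂ))

/-- The S-matrix of the unfolded SL(2,ℤ)-representation:
`(Ŝf)(x) = ∑_{y ∈ F} ζ^{Tr(x^r·y)}·f(y)`. -/
noncomputable def Shat (r : ℕ) {F : Type*} [Field F] [Fintype F] [Algebra (ZMod r) F]
    (f : F → ℂ) : F → ℂ :=
  fun x => ∑ y : F, zmodExp r (Algebra.trace (ZMod r) F (x ^ r * y)) * f y

/-- The T-matrix of the unfolded SL(2,ℤ)-representation: `(T̂f)(x) = ζ^{−N(x)}·f(x)`. -/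
noncomputable def That (r : ℕ) {F : Type*} [Field F] [Fintype F] [Algebra (ZMod r) F]
    (f : F → ℂ) : F → ℂ :=
  fun x => zmodExp r (-(Algebra.norm (ZMod r) x)) * f x

/-- The alternating sum `s(m) = ∑_{j=0}^{r} (−1)^j·ζ^{m·Tr(u^j)}`. -/
noncomputable def sSum (r : ℕ) {F : Type*} [Field F] [Fintype F] [Algebra (ZMod r) F]
    (u : F) (m : ZMod r) : ℂ :=
  ∑ j ∈ Finset.range (r + 1), (-1 : ℂ) ^ j * zmodExp r (m * Algebra.trace (ZMod r) F (u ^ j))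

open scoped Classical


private lemma sum_range_add' (f : ℕ → ℂ) (m n : ℕ) :
    ∑ j ∈ range (m + n), f j = (∑ j ∈ range m, f j) + ∑ j ∈ range n, f (m + j) := by
  induction n with
  | zero => simp
  | succ n ih =>
    rw [show m + (n+1) = (m+n)+1 by ring, Finset.sum_range_succ, ih, Finset.sum_range_succ,
      add_assoc]

private lemma sum_split' (f : ℕ → ℂ) (M : ℕ) :
    ∑ j ∈ range (2 * M), f j = (∑ k ∈ range M, f (2*k)) + ∑ k ∈ range M, f (2*k+1) := by
  induction M with
  | zero => simp
  | succ M ih =>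
    rw [show 2*(M+1) = (2*M+1)+1 by ring, Finset.sum_range_succ, Finset.sum_range_succ, ih,
      Finset.sum_range_succ, Finset.sum_range_succ]
    ring

private lemma sum_alt' (f : ℕ → ℂ) (M : ℕ) :
    ∑ j ∈ range (2 * M), (-1:ℂ)^j * f j
      = (∑ k ∈ range M, f (2*k)) - ∑ k ∈ range M, f (2*k+1) := by
  induction M with
  | zero => simp
  | succ M ih =>
    rw [show 2*(M+1) = (2*M+1)+1 by ring, Finset.sum_range_succ, Finset.sum_range_succ, ih,
      Finset.sum_range_succ, Finset.sum_range_succ]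
    have h1 : ((-1:ℂ))^(2*M) = 1 := by
      rw [pow_mul]; norm_num
    have h2 : ((-1:ℂ))^(2*M+1) = -1 := by
      rw [pow_succ, h1]; ring
    rw [h1, h2]; ring

private lemma shift1' (f : ℕ → ℂ) (M : ℕ) (hf : ∀ k, f (k + M) = f k) :
    ∑ k ∈ range M, f (k + 1) = ∑ k ∈ range M, f k := by
  have h0 : f M = f 0 := by simpa using hf 0
  have h1 := Finset.sum_range_succ' f M
  have h2 := Finset.sum_range_succ f M
  have h3 : (∑ k ∈ range M, f (k + 1)) + f 0 = (∑ k ∈ range M, f k) + f M := h1.symm.trans h2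
  rw [h0] at h3
  exact add_right_cancel h3

private lemma sum_shift' (f : ℕ → ℂ) (M : ℕ) (hf : ∀ k, f (k + M) = f k) (m : ℕ) :
    ∑ k ∈ range M, f (k + m) = ∑ k ∈ range M, f k := by
  induction m with
  | zero => simp
  | succ m ih =>
    have e1 : ∑ k ∈ range M, f (k + (m+1)) = ∑ k ∈ range M, (fun j => f (j + m)) (k + 1) := by
      apply Finset.sum_congr rfl; intro k _; simp only; congr 1; omega
    have e2 : ∀ k, (fun j => f (j + m)) (k + M) = (fun j => f (j + m)) k := by
      intro k; simp only; rw [show k + M + m = (k + m) + M by ring, hf]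
    exact e1.trans ((shift1' (fun j => f (j + m)) M e2).trans ih)

private lemma zmodExp_pow_eq (r : ℕ) [NeZero r] (n : ZMod r) :
    zmodExp r n = Complex.exp (2 * Real.pi * Complex.I / r) ^ n.val := by
  rw [← Complex.exp_nat_mul]
  unfold zmodExp
  congr 1
  ring

private lemma zmodExp_add (r : ℕ) [NeZero r] (m n : ZMod r) :
    zmodExp r (m + n) = zmodExp r m * zmodExp r n := by
  have hr0 : (r:ℂ) ≠ 0 := Nat.cast_ne_zero.mpr (NeZero.ne r)
  have hζ : Complex.exp (2 * Real.pi * Complex.I / r) ^ r = 1 := by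
    rw [← Complex.exp_nat_mul,
      show (r:ℂ) * (2 * Real.pi * Complex.I / r) = 2 * Real.pi * Complex.I by field_simp]
    exact Complex.exp_two_pi_mul_I
  rw [zmodExp_pow_eq, zmodExp_pow_eq, zmodExp_pow_eq, ← pow_add, ZMod.val_add,
    ← pow_eq_pow_mod _ hζ]

private lemma powL1 {F : Type*} [Field F] {p : F} (hp : p ≠ 0) {r : ℕ} (hr : 1 ≤ r)
    (hpr : p ^ (r*r) = p) : (p^(r-1))^(r+1) = 1 := by
  obtain ⟨m, rfl⟩ : ∃ m, r = m + 1 := ⟨r - 1, by omega⟩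
  simp only [Nat.add_sub_cancel]
  have h1 : p ^ ((m+1)*(m+1)) = p ^ (m*(m+2)) * p := by
    rw [← pow_succ]; congr 1; ring
  have h2 : p ^ (m*(m+2)) * p = 1 * p := by rw [← h1, hpr, one_mul]
  have h3 : p ^ (m*(m+2)) = 1 := mul_right_cancel₀ hp h2
  rw [← pow_mul]; exact h3

private lemma powL2 {F : Type*} [Field F] (p : F) {r : ℕ} (hr : 1 ≤ r)
    (hpr : p ^ (r*r) = p) : (p^(r-1))^r * p^r = p := by
  obtain ⟨m, rfl⟩ : ∃ m, r = m + 1 := ⟨r - 1, by omega⟩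
  simp only [Nat.add_sub_cancel]
  rw [← pow_mul, ← pow_add, show m*(m+1)+(m+1) = (m+1)*(m+1) by ring]
  exact hpr

private lemma powL3 {F : Type*} [Field F] (p : F) {r : ℕ} (hr : 1 ≤ r) :
    p^(r-1) * p = p^r := by
  obtain ⟨m, rfl⟩ : ∃ m, r = m + 1 := ⟨r - 1, by omega⟩
  simp only [Nat.add_sub_cancel]
  rw [← pow_succ]

/-- Equation (s): the value of `s(1)` as an explicit character sum, with a sign
depending on `r mod 4`. -/
theorem stmt9 (r : ℕ) [NeZero r] (hr : r.Prime) (hodd : Odd r) (h3 : r % 3 = 2)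
    (F : Type*) [Field F] [Fintype F] [Algebra (ZMod r) F]
    (hcard : Fintype.card F = r ^ 2)
    (u : F) (hu : orderOf u = r + 1) :
    (r % 4 = 1 → sSum r u 1 =
      zmodExp r (-2) * (∑ a ∈ Finset.univ.filter (fun a : ZMod r => a ≠ 0),
          zmodExp r (3 * (a ^ 2 + a + 1)⁻¹)) -
        zmodExp r (-2) * (∑ a ∈ Finset.univ.filter (fun a : ZMod r => a ≠ 0),
          zmodExp r (3 * ((2 * a + 1) * (a ^ 2 + a + 1)⁻¹) ^ 2))) ∧
    (r % 4 = 3 → sSum r u 1 =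
      -(zmodExp r (-2) * (∑ a ∈ Finset.univ.filter (fun a : ZMod r => a ≠ 0),
          zmodExp r (3 * (a ^ 2 + a + 1)⁻¹)) -
        zmodExp r (-2) * (∑ a ∈ Finset.univ.filter (fun a : ZMod r => a ≠ 0),
          zmodExp r (3 * ((2 * a + 1) * (a ^ 2 + a + 1)⁻¹) ^ 2)))) := by
  haveI : Fact r.Prime := ⟨hr⟩
  have hrodd : r % 2 = 1 := Nat.odd_iff.mp hodd
  have hr5 : 5 ≤ r := by have := hr.two_le; omega
  set i : ZMod r →+* F := algebraMap (ZMod r) F with hidef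
  have hi : Function.Injective i := i.injective
  haveI hchar : CharP F r := charP_of_injective_algebraMap hi r
  have hpowcard : ∀ x : F, x ^ (r*r) = x := by
    intro x
    have h := FiniteField.pow_card x
    rwa [hcard, pow_two] at h
  have hfr : Module.finrank (ZMod r) F = 2 := by
    have h := Module.card_eq_pow_finrank (K := ZMod r) (V := F)
    rw [ZMod.card, hcard] at h
    exact (Nat.pow_right_injective hr.two_le h.symm)
  -- construct θ with θ² = θ - 1
  obtain ⟨gU, hgU⟩ := IsCyclic.exists_ofOrder_eq_natCard (α := Fˣ)
  have hcardU : Nat.card Fˣ = r*r - 1 := by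
    rw [Nat.card_eq_fintype_card, Fintype.card_units, hcard, pow_two]
  obtain ⟨k6, hk6⟩ : ∃ k, r*r - 1 = 6*k := by
    obtain ⟨m, hm⟩ : ∃ m, r = 6*m+5 := ⟨r/6, by omega⟩
    have : r*r = 6*(6*m*m+10*m+4)+1 := by subst hm; ring
    exact ⟨6*m*m+10*m+4, by omega⟩
  have hk60 : k6 ≠ 0 := by
    intro h0
    rw [h0] at hk6
    have : 5*5 ≤ r*r := Nat.mul_le_mul hr5 hr5
    omega
  set θ : F := ((gU ^ k6 : Fˣ) : F) with hθdef
  have hordθ : orderOf θ = 6 := by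
    rw [hθdef, orderOf_units, orderOf_pow, hgU, hcardU, hk6,
      Nat.gcd_eq_right (dvd_mul_left k6 6), Nat.mul_div_cancel _ (by omega)]
  have hθ6 : θ^6 = 1 := by rw [← hordθ]; exact pow_orderOf_eq_one θ
  have hθ3 : θ^3 = -1 := by
    have h2 : (θ^3 - 1) * (θ^3 + 1) = 0 := by linear_combination hθ6
    rcases mul_eq_zero.mp h2 with h | h
    · exfalso
      have h1 : θ^3 = 1 := by linear_combination h
      have := orderOf_dvd_of_pow_eq_one h1
      rw [hordθ] at this
      exact absurd this (by decide)
    · linear_combination h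
  have hθ2 : θ^2 = θ - 1 := by
    have hne : θ ≠ -1 := by
      intro h
      have h1 : θ^2 = 1 := by rw [h]; ring
      have := orderOf_dvd_of_pow_eq_one h1
      rw [hordθ] at this
      exact absurd this (by decide)
    have h2 : (θ + 1) * (θ^2 - θ + 1) = 0 := by linear_combination hθ3
    rcases mul_eq_zero.mp h2 with h | h
    · exact absurd (by linear_combination h) hne
    · linear_combination h
  -- θ is not in the prime field
  have hnotim : ∀ c : ZMod r, i c ≠ θ := by
    intro c hc
    have hc2 : c^2 = c - 1 := by
      apply hi; rw [map_pow, map_sub, map_one, hc]; exact hθ2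
    have hc0 : c ≠ 0 := by
      rintro rfl
      have : (1 : ZMod r) = 0 := by linear_combination hc2
      exact one_ne_zero this
    have hc3 : c^3 = -1 := by linear_combination (c+1) * hc2
    have hc6 : c^6 = 1 := by linear_combination (c^3 - 1) * hc3
    set cu : (ZMod r)ˣ := Units.mk0 c hc0 with hcu
    have hcuv : (cu : ZMod r) = c := rfl
    have hcu6 : cu^6 = 1 := by
      apply Units.ext; rw [Units.val_pow_eq_pow_val, hcuv, hc6, Units.val_one]
    have hd : orderOf cu ∣ 6 := orderOf_dvd_of_pow_eq_one hcu6
    have hcne1 : c ≠ 1 := by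
      rintro rfl
      have : (1 : ZMod r) = 0 := by linear_combination hc2
      exact one_ne_zero this
    have hcu1 : cu ≠ 1 := by
      intro h; exact hcne1 (by rw [← hcuv, h, Units.val_one])
    have hcu2 : cu^2 ≠ 1 := by
      intro h
      have h1 : c^2 = 1 := by
        rw [← hcuv, ← Units.val_pow_eq_pow_val, h, Units.val_one]
      have h4 : c = 2 := by linear_combination h1 - hc2
      have h30 : (3 : ZMod r) = 0 := by rw [h4] at h1; linear_combination h1
      have : ((3:ℕ) : ZMod r) = 0 := by exact_mod_cast h30
      have := (ZMod.natCast_eq_zero_iff 3 r).mp this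
      have := Nat.le_of_dvd (by norm_num) this
      omega
    have hcu3 : cu^3 ≠ 1 := by
      intro h
      have h1 : c^3 = 1 := by
        rw [← hcuv, ← Units.val_pow_eq_pow_val, h, Units.val_one]
      have h20 : (2 : ZMod r) = 0 := by rw [hc3] at h1; linear_combination -h1
      have : ((2:ℕ) : ZMod r) = 0 := by exact_mod_cast h20
      have := (ZMod.natCast_eq_zero_iff 2 r).mp this
      have := Nat.le_of_dvd (by norm_num) this
      omega
    have hord6 : orderOf cu = 6 := by
      have hpos : 0 < orderOf cu := orderOf_pos cu
      have hle : orderOf cu ≤ 6 := Nat.le_of_dvd (by norm_num) hd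
      interval_cases h : orderOf cu
      · exact absurd (orderOf_eq_one_iff.mp h) hcu1
      · exact absurd (by rw [← h]; exact pow_orderOf_eq_one cu) hcu2
      · exact absurd (by rw [← h]; exact pow_orderOf_eq_one cu) hcu3
      · exact absurd hd (by decide)
      · exact absurd hd (by decide)
      · rfl
    have hcr : cu ^ (r-1) = 1 := by
      apply Units.ext
      rw [Units.val_pow_eq_pow_val, hcuv, Units.val_one]
      exact ZMod.pow_card_sub_one_eq_one hc0
    have h6dvd : (6:ℕ) ∣ r - 1 := hord6 ▸ orderOf_dvd_of_pow_eq_one hcr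
    obtain ⟨t, ht⟩ := h6dvd
    omega
  have hθ0 : θ ≠ 0 := fun h => hnotim 0 (by rw [map_zero, h])
  have hfrobθ : θ^r = 1 - θ := by
    have hpow : (θ^r)^2 = θ^r - 1 := by
      have h1 : (θ^2)^r = θ^r - 1 := by
        rw [hθ2, sub_pow_char, one_pow]
      rw [← pow_right_comm]; exact h1
    have hfactor : (θ^r - θ) * (θ^r - (1 - θ)) = 0 := by linear_combination hpow - hθ2
    rcases mul_eq_zero.mp hfactor with h | h
    · exfalso
      have h1 : θ^r = θ := by linear_combination h
      have h2 : θ^(r-1) * θ = 1 * θ := by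
        rw [powL3 θ (by omega), h1, one_mul]
      have h3 : θ^(r-1) = 1 := mul_right_cancel₀ hθ0 h2
      have := orderOf_dvd_of_pow_eq_one h3
      rw [hordθ] at this
      obtain ⟨t, ht⟩ := this
      omega
    · linear_combination h
  -- fixed points of Frobenius are in the prime field
  have hfix : ∀ x : F, x^r = x → ∃ c : ZMod r, i c = x := by
    intro x hx
    by_contra hcon
    push_neg at hcon
    set P : Polynomial F := Polynomial.X ^ r - Polynomial.X with hP
    have hdeg : P.natDegree = r := by
      rw [hP, Polynomial.natDegree_sub_eq_left_of_natDegree_lt] <;>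
        simp [Polynomial.natDegree_X_pow, Polynomial.natDegree_X] <;> omega
    have hPne : P ≠ 0 := by
      intro h0; rw [h0] at hdeg; simp at hdeg; omega
    have hroots : ∀ y : F, y ^ r = y → y ∈ P.roots.toFinset := by
      intro y hy
      rw [Multiset.mem_toFinset, Polynomial.mem_roots hPne]
      simp [hP, Polynomial.IsRoot, hy]
    have hsub : insert x (Finset.univ.image i) ⊆ P.roots.toFinset := by
      intro y hy
      rcases Finset.mem_insert.mp hy with rfl | hy
      · exact hroots _ hx
      · obtain ⟨c, _, rfl⟩ := Finset.mem_image.mp hy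
        exact hroots _ (by rw [← map_pow, ZMod.pow_card])
    have hcardS : (insert x (Finset.univ.image i)).card = r + 1 := by
      rw [Finset.card_insert_of_notMem (by
        intro h
        obtain ⟨c, _, hc⟩ := Finset.mem_image.mp h
        exact hcon c hc),
        Finset.card_image_of_injective _ hi, Finset.card_univ, ZMod.card]
    have hle : P.roots.toFinset.card ≤ r := by
      calc P.roots.toFinset.card ≤ Multiset.card P.roots := Multiset.toFinset_card_le _
        _ ≤ P.natDegree := Polynomial.card_roots' P
        _ = r := hdeg
    have := Finset.card_le_card hsub
    omega
  -- the trace is x + x^r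
  haveI : FiniteDimensional (ZMod r) F := inferInstance
  have hfrobmap : ∀ x y : F, (x+y)^r = x^r + y^r := fun x y => add_pow_char x y r
  let ψ : F →ₐ[ZMod r] F :=
    { toFun := fun x => x^r
      map_one' := one_pow r
      map_mul' := fun x y => mul_pow x y r
      map_zero' := zero_pow (by omega)
      map_add' := hfrobmap
      commutes' := fun c => by
        show ((algebraMap (ZMod r) F) c)^r = (algebraMap (ZMod r) F) c
        rw [← map_pow, ZMod.pow_card] }
  have hψinj : Function.Injective ψ := by
    have : Function.Injective (ψ : F →+* F) := RingHom.injective _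
    exact this
  let φ : F ≃ₐ[ZMod r] F := AlgEquiv.ofBijective ψ
    ((Finite.injective_iff_bijective).mp hψinj)
  have hφ : ∀ x : F, φ x = x^r := fun _ => rfl
  have hrefl_ne : (AlgEquiv.refl : F ≃ₐ[ZMod r] F) ≠ φ := by
    intro h
    have hθθ : θ = θ^r := by
      calc θ = (AlgEquiv.refl : F ≃ₐ[ZMod r] F) θ := rfl
        _ = φ θ := by rw [h]
        _ = θ^r := hφ θ
    rw [hfrobθ] at hθθ
    have h2θ : i 2 * θ = 1 := by
      rw [map_ofNat]; linear_combination hθθ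
    have h20 : (2 : ZMod r) ≠ 0 := by
      intro h0
      rw [h0, map_zero, zero_mul] at h2θ
      exact zero_ne_one h2θ
    have hi2 : i 2 ≠ 0 := fun h0 => h20 (hi (by rw [h0, map_zero]))
    have : θ = i (2⁻¹) := by
      rw [map_inv₀]
      field_simp
      linear_combination h2θ
    exact hnotim _ this.symm
  have hunivaut : (Finset.univ : Finset (F ≃ₐ[ZMod r] F)) = {AlgEquiv.refl, φ} := by
    symm
    apply Finset.eq_univ_of_card
    rw [Finset.card_pair hrefl_ne, ← Nat.card_eq_fintype_card, IsGalois.card_aut_eq_finrank, hfr]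
  have htr : ∀ x : F, i (Algebra.trace (ZMod r) F x) = x + x^r := by
    intro x
    have h1 := trace_eq_sum_automorphisms (K := ZMod r) x
    rw [show (algebraMap (ZMod r) F) = i from rfl] at h1
    rw [h1]
    rw [show (∑ σ : F ≃ₐ[ZMod r] F, σ x) = ∑ σ ∈ (Finset.univ : Finset (F ≃ₐ[ZMod r] F)), σ x from rfl,
      hunivaut, Finset.sum_pair hrefl_ne]
    rfl
  have htr1 : Algebra.trace (ZMod r) F 1 = 2 := by
    apply hi; rw [htr, one_pow, map_ofNat]; norm_num
  have htrn1 : Algebra.trace (ZMod r) F (-1) = -2 := by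
    apply hi; rw [htr, hodd.neg_one_pow, map_neg, map_ofNat]; ring
  have htrθ : Algebra.trace (ZMod r) F θ = 1 := by
    apply hi; rw [htr, hfrobθ, map_one]; ring
  have htrθ2 : Algebra.trace (ZMod r) F (θ^2) = -1 := by
    apply hi
    rw [htr, pow_right_comm, hfrobθ, map_neg, map_one, hθ2]
    ring_nf
    linear_combination hθ2
  -- the parametrization W of the circle minus {-1}
  set W : ZMod r → F := fun a => -((i a + θ)^(r-1)) with hWdef
  have hWa_def : ∀ a : ZMod r, W a = -((i a + θ)^(r-1)) := fun _ => rfl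
  have hp0 : ∀ a : ZMod r, i a + θ ≠ 0 := by
    intro a h
    exact hnotim (-a) (by rw [map_neg]; linear_combination -h)
  have hfrobp : ∀ a : ZMod r, (i a + θ)^r = i a + 1 - θ := by
    intro a
    rw [add_pow_char, ← map_pow, ZMod.pow_card, hfrobθ]
    ring
  have hpq : ∀ a : ZMod r, (i a + θ) * ((i a + θ)^r) = i (a^2+a+1) := by
    intro a
    rw [hfrobp a, map_add, map_add, map_pow, map_one]
    linear_combination -hθ2
  have hppq : ∀ a : ZMod r, (i a + θ) + ((i a + θ)^r) = i (2*a+1) := by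
    intro a
    rw [hfrobp a, map_add, map_mul, map_one, map_ofNat]
    ring
  have h3F : ∀ a : ZMod r, (4:F) * ((i a + θ) * ((i a + θ)^r)) - ((i a + θ) + (i a + θ)^r)^2 = 3 := by
    intro a
    rw [hpq a, hppq a]
    have hz : (4:ZMod r)*(a^2+a+1) - (2*a+1)^2 = 3 := by ring
    calc (4:F) * i (a^2+a+1) - (i (2*a+1))^2
        = i (4*(a^2+a+1) - (2*a+1)^2) := by rw [map_sub, map_mul, map_pow, map_ofNat]
      _ = i 3 := by rw [hz]
      _ = 3 := map_ofNat i 3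
  have hI : ∀ a : ZMod r, (3:ZMod r) * (a ^ 2 + a + 1)⁻¹ = 2 + Algebra.trace (ZMod r) F (W a) := by
    intro a
    have hp : (i a + θ) ≠ 0 := hp0 a
    have hq : (i a + θ)^r ≠ 0 := pow_ne_zero r hp
    have hx1 : (i a + θ)^(r-1) * (i a + θ) = (i a + θ)^r := powL3 _ (by omega)
    have hx2 : ((i a + θ)^(r-1))^r * ((i a + θ)^r) = (i a + θ) := powL2 _ (by omega) (hpowcard _)
    have hXv : (i a + θ)^(r-1) = (i a + θ)^r / (i a + θ) := by rw [eq_div_iff hp]; exact hx1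
    have hXrv : ((i a + θ)^(r-1))^r = (i a + θ) / ((i a + θ)^r) := by rw [eq_div_iff hq]; exact hx2
    apply hi
    have hRHS : i (2 + Algebra.trace (ZMod r) F (W a)) = 2 + (W a + (W a)^r) := by
      rw [map_add, map_ofNat, htr]
    rw [map_mul, map_inv₀, map_ofNat, hRHS, hWa_def a, hodd.neg_pow, ← hpq a]
    have key : (3:F) = 2*((i a + θ) * (i a + θ)^r) - ((i a + θ)^r)^2 - (i a + θ)^2 := by
      linear_combination -(h3F a)
    rw [hXrv, hXv, key]
    field_simp
    ring
  have hII : ∀ a : ZMod r, (3:ZMod r) * ((2 * a + 1) * (a ^ 2 + a + 1)⁻¹) ^ 2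
      = 2 - Algebra.trace (ZMod r) F ((W a)^2) := by
    intro a
    have hp : (i a + θ) ≠ 0 := hp0 a
    have hq : (i a + θ)^r ≠ 0 := pow_ne_zero r hp
    have hx1 : (i a + θ)^(r-1) * (i a + θ) = (i a + θ)^r := powL3 _ (by omega)
    have hx2 : ((i a + θ)^(r-1))^r * ((i a + θ)^r) = (i a + θ) := powL2 _ (by omega) (hpowcard _)
    have hXv : (i a + θ)^(r-1) = (i a + θ)^r / (i a + θ) := by rw [eq_div_iff hp]; exact hx1
    have hXrv : ((i a + θ)^(r-1))^r = (i a + θ) / ((i a + θ)^r) := by rw [eq_div_iff hq]; exact hx2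
    apply hi
    have hRHS : i (2 - Algebra.trace (ZMod r) F ((W a)^2)) = 2 - ((W a)^2 + ((W a)^2)^r) := by
      rw [map_sub, map_ofNat, htr]
    rw [map_mul, map_pow, map_mul, map_inv₀, map_ofNat, hRHS, hWa_def a, neg_sq,
      pow_right_comm ((i a + θ)^(r-1)) 2 r, ← hpq a, ← hppq a]
    rw [hXrv, hXv]
    have key2 : (3:F) * ((i a + θ) + (i a + θ)^r)^2
        = 2*((i a + θ) * (i a + θ)^r)^2 - (i a + θ)^4 - ((i a + θ)^r)^4 := by
      linear_combination (-(((i a + θ) + (i a + θ)^r)^2)) * (h3F a)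
    field_simp
    linear_combination key2
  -- the circle
  have hu1 : u^(r+1) = 1 := by rw [← hu]; exact pow_orderOf_eq_one u
  set Circ : Finset F := Finset.univ.filter (fun w => w^(r+1) = 1) with hCircdef
  have humem : ∀ j : ℕ, u^j ∈ Circ := by
    intro j
    rw [hCircdef, Finset.mem_filter]
    exact ⟨Finset.mem_univ _, by rw [pow_right_comm, hu1, one_pow]⟩
  have hinjU : ∀ x ∈ Finset.range (r+1), ∀ y ∈ Finset.range (r+1), u^x = u^y → x = y := by
    intro x hx y hy hxy
    have h := pow_injOn_Iio_orderOf (x := u)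
    rw [hu] at h
    exact h (Set.mem_Iio.mpr (Finset.mem_range.mp hx)) (Set.mem_Iio.mpr (Finset.mem_range.mp hy)) hxy
  have hUimg : (Finset.range (r+1)).image (fun j => u^j) = Circ := by
    apply Finset.eq_of_subset_of_card_le
    · intro w hw
      obtain ⟨j, _, rfl⟩ := Finset.mem_image.mp hw
      exact humem j
    · rw [Finset.card_image_of_injOn (fun x hx y hy h => hinjU x hx y hy h), Finset.card_range]
      set Q : Polynomial F := Polynomial.X ^ (r+1) - Polynomial.C 1 with hQ
      have hQne : Q ≠ 0 := Polynomial.X_pow_sub_C_ne_zero (by omega) 1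
      have hsub : Circ ⊆ Q.roots.toFinset := by
        intro w hw
        rw [hCircdef, Finset.mem_filter] at hw
        rw [Multiset.mem_toFinset, Polynomial.mem_roots hQne]
        simp [hQ, Polynomial.IsRoot, hw.2]
      calc Circ.card ≤ Q.roots.toFinset.card := Finset.card_le_card hsub
        _ ≤ Multiset.card Q.roots := Multiset.toFinset_card_le _
        _ ≤ Q.natDegree := Polynomial.card_roots' Q
        _ = r + 1 := by rw [hQ, Polynomial.natDegree_X_pow_sub_C]
  have hCcard : Circ.card = r + 1 := by
    rw [← hUimg, Finset.card_image_of_injOn (fun x hx y hy h => hinjU x hx y hy h),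
      Finset.card_range]
  have hWinj : Function.Injective W := by
    intro a b hab
    rw [hWa_def a, hWa_def b, neg_inj] at hab
    have hpb : (i b + θ) ≠ 0 := hp0 b
    have hc : ((i a + θ) * (i b + θ)⁻¹)^r = (i a + θ) * (i b + θ)⁻¹ := by
      have h2 : ((i a + θ) * (i b + θ)⁻¹)^(r-1) = 1 := by
        rw [mul_pow, inv_pow, hab, mul_inv_cancel₀ (pow_ne_zero _ hpb)]
      calc ((i a + θ) * (i b + θ)⁻¹)^r
          = ((i a + θ) * (i b + θ)⁻¹)^(r-1) * ((i a + θ) * (i b + θ)⁻¹) :=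
            (powL3 _ (by omega)).symm
        _ = (i a + θ) * (i b + θ)⁻¹ := by rw [h2, one_mul]
    obtain ⟨γ, hγ⟩ := hfix _ hc
    have hpa_eq : i a + θ = i γ * (i b + θ) := by
      have h5 : i γ * (i b + θ) = ((i a + θ) * (i b + θ)⁻¹) * (i b + θ) := by rw [hγ]
      rw [h5, inv_mul_cancel_right₀ hpb]
    by_cases hγ1 : γ = 1
    · rw [hγ1, map_one, one_mul] at hpa_eq
      have : i a = i b := by linear_combination hpa_eq
      exact hi this
    · exfalso
      have hne : (1:ZMod r) - γ ≠ 0 := sub_ne_zero.mpr (Ne.symm hγ1)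
      have hneF : i (1 - γ) ≠ 0 := fun h => hne (hi (by rw [h, map_zero]))
      apply hnotim ((γ*b - a) * (1-γ)⁻¹)
      rw [map_mul, map_inv₀, mul_inv_eq_iff_eq_mul₀ hneF, map_sub, map_mul, map_sub, map_one]
      linear_combination -hpa_eq
  have hWne1 : ∀ a : ZMod r, W a ≠ -1 := by
    intro a h
    rw [hWa_def a, neg_inj] at h
    have h2 : (i a + θ)^r = i a + θ := by
      rw [← powL3 _ (show (1:ℕ) ≤ r by omega), h, one_mul]
    obtain ⟨c, hc⟩ := hfix _ h2
    exact hnotim (c - a) (by rw [map_sub, hc]; ring)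
  have hWcirc : ∀ a : ZMod r, W a ∈ Circ := by
    intro a
    rw [hCircdef, Finset.mem_filter]
    refine ⟨Finset.mem_univ _, ?_⟩
    rw [hWa_def a, (hodd.add_one).neg_pow]
    exact powL1 (hp0 a) (by omega) (hpowcard _)
  have hneg1C : (-1:F) ∈ Circ := by
    rw [hCircdef, Finset.mem_filter]
    exact ⟨Finset.mem_univ _, by rw [(hodd.add_one).neg_pow, one_pow]⟩
  have hWimg : Finset.univ.image W = Circ.erase (-1) := by
    apply Finset.eq_of_subset_of_card_le
    · intro w hw
      obtain ⟨a, _, rfl⟩ := Finset.mem_image.mp hw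
      exact Finset.mem_erase.mpr ⟨hWne1 a, hWcirc a⟩
    · rw [Finset.card_erase_of_mem hneg1C, hCcard,
        Finset.card_image_of_injective _ hWinj, Finset.card_univ, ZMod.card]
      omega
  have hsumW : ∀ G : F → ℂ, ∑ a : ZMod r, G (W a) = (∑ j ∈ Finset.range (r+1), G (u^j)) - G (-1) := by
    intro G
    have h1 : ∑ a : ZMod r, G (W a) = ∑ w ∈ Finset.univ.image W, G w :=
      (Finset.sum_image (fun x _ y _ h => hWinj h)).symm
    rw [h1, hWimg, Finset.sum_erase_eq_sub hneg1C, ← hUimg, Finset.sum_image hinjU]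
  have hW0 : W 0 = θ := by
    have h1 : θ^(r-1) * θ = θ^r := powL3 θ (by omega)
    rw [hfrobθ] at h1
    have h2 : θ^(r-1) * θ = (-θ) * θ := by
      rw [h1]; linear_combination hθ2
    have h3 : θ^(r-1) = -θ := mul_right_cancel₀ hθ0 h2
    rw [hWa_def 0, map_zero, zero_add, h3, neg_neg]
  -- sum machinery
  set g : ℕ → ℂ := fun j => zmodExp r (Algebra.trace (ZMod r) F (u^j)) with hgdef
  have hgj : ∀ j : ℕ, zmodExp r (Algebra.trace (ZMod r) F (u^j)) = g j := fun _ => rfl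
  set M : ℕ := (r+1)/2 with hMdef
  have h2M : 2 * M = r + 1 := by omega
  have hgper : ∀ j : ℕ, g (j + 2*M) = g j := by
    intro j
    have huj : u^(j + 2*M) = u^j := by rw [pow_add, h2M, hu1, mul_one]
    simp only [hgdef]
    rw [huj]
  have hMneg : u^M = -1 := by
    have h2 : (u^M)^2 = 1 := by rw [← pow_mul, show M*2 = r+1 by omega, hu1]
    have hne : u^M ≠ 1 := by
      intro h
      have hh := orderOf_dvd_of_pow_eq_one h
      rw [hu] at hh
      have := Nat.le_of_dvd (by omega) hh
      omega
    have hfac : (u^M - 1) * (u^M + 1) = 0 := by linear_combination h2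
    rcases mul_eq_zero.mp hfac with h | h
    · exact absurd (by linear_combination h) hne
    · linear_combination h
  have hA : zmodExp r (-2) * (∑ a ∈ Finset.univ.filter (fun a : ZMod r => a ≠ 0),
        zmodExp r (3 * (a ^ 2 + a + 1)⁻¹))
      = (∑ j ∈ Finset.range (r+1), g j) - zmodExp r (-2) - zmodExp r 1 := by
    have step : ∀ a : ZMod r, zmodExp r (-2) * zmodExp r (3 * (a ^ 2 + a + 1)⁻¹)
        = zmodExp r (Algebra.trace (ZMod r) F (W a)) := by
      intro a
      rw [← zmodExp_add]
      congr 1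
      rw [hI a]
      ring
    have hsum1 : ∑ a : ZMod r, zmodExp r (Algebra.trace (ZMod r) F (W a))
        = (∑ j ∈ Finset.range (r+1), zmodExp r (Algebra.trace (ZMod r) F (u^j)))
          - zmodExp r (Algebra.trace (ZMod r) F (-1)) :=
      hsumW (fun w => zmodExp r (Algebra.trace (ZMod r) F w))
    rw [Finset.mul_sum, Finset.sum_congr rfl (fun a _ => step a), Finset.filter_ne',
      Finset.sum_erase_eq_sub (Finset.mem_univ 0), hsum1, htrn1, hW0, htrθ]
  have hB : zmodExp r (-2) * (∑ a ∈ Finset.univ.filter (fun a : ZMod r => a ≠ 0),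
        zmodExp r (3 * ((2 * a + 1) * (a ^ 2 + a + 1)⁻¹) ^ 2))
      = (∑ j ∈ Finset.range (r+1), g (2*j + M)) - zmodExp r (-2) - zmodExp r 1 := by
    have step : ∀ a : ZMod r, zmodExp r (-2) * zmodExp r (3 * ((2 * a + 1) * (a ^ 2 + a + 1)⁻¹) ^ 2)
        = zmodExp r (- Algebra.trace (ZMod r) F ((W a)^2)) := by
      intro a
      rw [← zmodExp_add]
      congr 1
      rw [hII a]
      ring
    have hsum2 : ∑ a : ZMod r, zmodExp r (- Algebra.trace (ZMod r) F ((W a)^2))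
        = (∑ j ∈ Finset.range (r+1), zmodExp r (- Algebra.trace (ZMod r) F ((u^j)^2)))
          - zmodExp r (- Algebra.trace (ZMod r) F (((-1):F)^2)) :=
      hsumW (fun w => zmodExp r (- Algebra.trace (ZMod r) F (w^2)))
    have hterm : ∀ j : ℕ, zmodExp r (- Algebra.trace (ZMod r) F ((u^j)^2)) = g (2*j + M) := by
      intro j
      rw [← hgj]
      congr 1
      have h1 : (u^j)^2 = u^(2*j) := by rw [← pow_mul, Nat.mul_comm]
      have h2 : u^(2*j + M) = - u^(2*j) := by rw [pow_add, hMneg, mul_neg_one]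
      rw [h1, h2, map_neg]
    rw [Finset.mul_sum, Finset.sum_congr rfl (fun a _ => step a), Finset.filter_ne',
      Finset.sum_erase_eq_sub (Finset.mem_univ 0), hsum2,
      Finset.sum_congr rfl (fun j _ => hterm j), hW0, neg_one_sq, htr1, htrθ2]
    norm_num
  have hD : ∑ j ∈ Finset.range (r+1), g (2*j + M) = 2 * ∑ k ∈ Finset.range M, g (2*k + M) := by
    have e0 : r + 1 = M + M := by omega
    rw [e0, sum_range_add']
    rw [Finset.sum_congr rfl (fun j _ => show g (2*(M + j) + M) = g ((2*j + M) + 2*M) by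
      congr 1; ring)]
    rw [Finset.sum_congr rfl (fun j _ => hgper (2*j + M))]
    ring
  have hC : (∑ j ∈ Finset.range (r+1), g j)
      = (∑ k ∈ Finset.range M, g (2*k)) + ∑ k ∈ Finset.range M, g (2*k+1) := by
    rw [show r + 1 = 2*M from h2M.symm]
    exact sum_split' g M
  have hsS : sSum r u 1 = (∑ k ∈ Finset.range M, g (2*k)) - ∑ k ∈ Finset.range M, g (2*k+1) := by
    simp only [sSum, one_mul, hgj]
    rw [show r + 1 = 2*M from h2M.symm]
    exact sum_alt' g M
  constructor
  · intro h4
    obtain ⟨t, ht⟩ : ∃ t, M = 2*t + 1 := ⟨(M-1)/2, by omega⟩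
    have hO : ∑ k ∈ Finset.range M, g (2*k + M) = ∑ k ∈ Finset.range M, g (2*k + 1) := by
      have hper : ∀ k : ℕ, (fun k => g (2*k+1)) (k + M) = (fun k => g (2*k+1)) k := by
        intro k
        simp only
        rw [show 2*(k+M)+1 = (2*k+1) + 2*M by ring]
        exact hgper (2*k+1)
      rw [Finset.sum_congr rfl (fun k _ => show g (2*k + M) = (fun k => g (2*k+1)) (k + t) by
        simp only; congr 1; omega)]
      exact sum_shift' (fun k => g (2*k+1)) M hper t
    rw [hsS, hA, hB, hD, hO, hC]
    ring
  · intro h4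
    obtain ⟨t, ht⟩ : ∃ t, M = 2*t := ⟨M/2, by omega⟩
    have hE : ∑ k ∈ Finset.range M, g (2*k + M) = ∑ k ∈ Finset.range M, g (2*k) := by
      have hper : ∀ k : ℕ, (fun k => g (2*k)) (k + M) = (fun k => g (2*k)) k := by
        intro k
        simp only
        rw [show 2*(k+M) = (2*k) + 2*M by ring]
        exact hgper (2*k)
      rw [Finset.sum_congr rfl (fun k _ => show g (2*k + M) = (fun k => g (2*k)) (k + t) by
        simp only; congr 1; omega)]
      exact sum_shift' (fun k => g (2*k)) M hper t
    rw [hsS, hA, hB, hD, hE, hC]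
    ring
end

section
/- Let c ∈ ZMod r with c ≠ 0 and c ≠ 3. Then ∑_{x ∈ ZMod r} χ(x)·χ(x+3)·χ(x+c) = ∑_{x ∈ ZMod r} χ(x)·χ((x−3)² + 4·c·x), as an identity of integers. -/
open Finset

open scoped Classical

/-- The quadratic character of `ZMod r` with values in `ℤ`:
`χ(m) = 1` if `m` is a nonzero square, `−1` if `m` is a nonsquare, `χ(0) = 0`. -/
noncomputable def chi (r : ℕ) (m : ZMod r) : ℤ :=
  if m = 0 then 0 else if IsSquare m then 1 else -1

lemma chi_eq_quadraticChar (r : ℕ) [Fact r.Prime] (m : ZMod r) :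
    chi r m = quadraticChar (ZMod r) m := by
  rw [quadraticChar_apply, quadraticCharFun, chi]
  split_ifs <;> rfl

/-- The key character-sum identity: for `a ≠ 0`,
`∑ χ(x)·χ(x²+bx+a) = ∑ χ(x)·χ((x−b)²−4a)`. -/
lemma key_sum {F : Type*} [Field F] [Fintype F] [DecidableEq F]
    (hF : ringChar F ≠ 2) (a b : F) (ha : a ≠ 0) :
    ∑ x : F, quadraticChar F x * quadraticChar F (x ^ 2 + b * x + a) =
      ∑ x : F, quadraticChar F x * quadraticChar F ((x - b) ^ 2 - 4 * a) := by
  set χ := quadraticChar F with hχ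
  have h2 : (2 : F) ≠ 0 := Ring.two_ne_zero hF
  -- Step 1: rewrite the LHS as a sum over nonzero x of χ(x + a/x + b).
  have step1 : ∑ x : F, χ x * χ (x ^ 2 + b * x + a) =
      ∑ x ∈ univ.filter (fun x : F => x ≠ 0), χ (x + a * x⁻¹ + b) := by
    rw [Finset.sum_filter]
    apply Finset.sum_congr rfl
    intro x _
    by_cases hx : x = 0
    · simp [hx, hχ]
    · rw [if_pos hx]
      have hfac : x ^ 2 + b * x + a = x * (x + a * x⁻¹ + b) := by
        field_simp; ring
      rw [hfac, map_mul, ← mul_assoc, ← sq, quadraticChar_sq_one hx, one_mul]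
  rw [step1]
  -- Step 2: fiberwise sum over t = x + a/x.
  have step2 : ∑ x ∈ univ.filter (fun x : F => x ≠ 0), χ (x + a * x⁻¹ + b) =
      ∑ t : F, ∑ x ∈ (univ.filter (fun x : F => x ≠ 0)).filter
          (fun x => x + a * x⁻¹ = t), χ (t + b) :=
    (Finset.sum_fiberwise' (univ.filter (fun x : F => x ≠ 0))
      (fun x => x + a * x⁻¹) (fun t => χ (t + b))).symm
  rw [step2]
  -- Step 3: count the fibers.
  have hcard : ∀ t : F,
      (((univ.filter (fun x : F => x ≠ 0)).filter (fun x => x + a * x⁻¹ = t)).card : ℤ)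
        = χ (t ^ 2 - 4 * a) + 1 := by
    intro t
    have hset : (univ.filter (fun x : F => x ≠ 0)).filter (fun x => x + a * x⁻¹ = t)
        = univ.filter (fun x : F => x ^ 2 - t * x + a = 0) := by
      ext x
      simp only [Finset.mem_filter, Finset.mem_univ, true_and]
      constructor
      · rintro ⟨hx, hxt⟩
        field_simp at hxt
        linear_combination hxt
      · intro hx
        have hx0 : x ≠ 0 := by
          rintro rfl
          apply ha
          simpa using hx
        refine ⟨hx0, ?_⟩
        field_simp
        linear_combination hx
    rw [hset]
    have hbij : (univ.filter (fun x : F => x ^ 2 - t * x + a = 0)).card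
        = ({y : F | y ^ 2 = t ^ 2 - 4 * a}).toFinset.card := by
      apply Finset.card_bij (fun x _ => 2 * x - t)
      · intro x hx
        simp only [Finset.mem_filter, Finset.mem_univ, true_and] at hx
        rw [Set.mem_toFinset]
        show (2 * x - t) ^ 2 = t ^ 2 - 4 * a
        linear_combination 4 * hx
      · intro x hx x' hx' h
        have : (2 : F) * x = 2 * x' := by linear_combination h
        exact mul_left_cancel₀ h2 this
      · intro y hy
        rw [Set.mem_toFinset] at hy
        refine ⟨(t + y) / 2, ?_, by field_simp; ring⟩
        simp only [Finset.mem_filter, Finset.mem_univ, true_and]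
        have hy' : y ^ 2 = t ^ 2 - 4 * a := hy
        have h22 : ((t + y) / 2) * 2 = t + y := div_mul_cancel₀ _ h2
        have hkey : (2 : F) ^ 2 * (((t + y) / 2) ^ 2 - t * ((t + y) / 2) + a) = 0 := by
          calc (2 : F) ^ 2 * (((t + y) / 2) ^ 2 - t * ((t + y) / 2) + a)
              = (((t + y) / 2) * 2) ^ 2 - t * (((t + y) / 2) * 2) * 2 + 4 * a := by ring
            _ = (t + y) ^ 2 - t * (t + y) * 2 + 4 * a := by rw [h22]
            _ = 0 := by linear_combination hy'
        exact (mul_eq_zero.mp hkey).resolve_left (pow_ne_zero 2 h2)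
    rw [hbij]
    exact_mod_cast quadraticChar_card_sqrts hF (t ^ 2 - 4 * a)
  -- Step 4: finish the computation.
  have step4 : ∀ t : F, ∑ x ∈ (univ.filter (fun x : F => x ≠ 0)).filter
      (fun x => x + a * x⁻¹ = t), χ (t + b) = (χ (t ^ 2 - 4 * a) + 1) * χ (t + b) := by
    intro t
    rw [Finset.sum_const, nsmul_eq_mul, hcard t]
  simp only [step4, add_mul, one_mul]
  rw [Finset.sum_add_distrib]
  have hzero : ∑ t : F, χ (t + b) = 0 := by
    have : ∑ t : F, χ (t + b) = ∑ t : F, χ t := Equiv.sum_comp (Equiv.addRight b) (fun t => χ t)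
    rw [this]
    exact quadraticChar_sum_zero hF
  rw [hzero, add_zero]
  apply Fintype.sum_equiv (Equiv.addRight b)
  intro t
  simp only [Equiv.coe_addRight]
  rw [add_sub_cancel_right, mul_comm]

/-- For `c ≠ 0`, `c ≠ 3`:
`∑_x χ(x)·χ(x+3)·χ(x+c) = ∑_x χ(x)·χ((x−3)² + 4cx)`. -/
theorem stmt15 (r : ℕ) [NeZero r] (hr : r.Prime) (hodd : Odd r) (hr3 : 3 < r)
    (c : ZMod r) (hc0 : c ≠ 0) (hc3 : c ≠ 3) :
    ∑ x : ZMod r, chi r x * chi r (x + 3) * chi r (x + c) =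
      ∑ x : ZMod r, chi r x * chi r ((x - 3) ^ 2 + 4 * c * x) := by
  haveI : Fact r.Prime := ⟨hr⟩
  have hchar : ringChar (ZMod r) ≠ 2 := by
    rw [ZMod.ringChar_zmod_n]
    intro h
    omega
  set χ := quadraticChar (ZMod r) with hχ
  simp only [chi_eq_quadraticChar, ← hχ]
  have ha : c ^ 2 - 3 * c ≠ 0 := by
    have : c ^ 2 - 3 * c = c * (c - 3) := by ring
    rw [this]
    exact mul_ne_zero hc0 (sub_ne_zero.mpr hc3)
  have hL : ∑ x : ZMod r, χ x * χ (x + 3) * χ (x + c) =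
      ∑ x : ZMod r, χ x * χ (x ^ 2 + (3 - 2 * c) * x + (c ^ 2 - 3 * c)) := by
    have h1 : ∀ x : ZMod r, χ x * χ (x + 3) * χ (x + c) = χ (x * (x + 3) * (x + c)) := by
      intro x; rw [map_mul, map_mul]
    simp only [h1]
    apply Fintype.sum_equiv (Equiv.addRight c)
    intro x
    simp only [Equiv.coe_addRight]
    have h2 : x * (x + 3) * (x + c) =
        (x + c) * ((x + c) ^ 2 + (3 - 2 * c) * (x + c) + (c ^ 2 - 3 * c)) := by ring
    rw [h2, map_mul]
  rw [hL, key_sum hchar (c ^ 2 - 3 * c) (3 - 2 * c) ha]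
  apply Finset.sum_congr rfl
  intro x _
  congr 1
  congr 1
  ring
end
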